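/- For any constant c : Bool, any F : (Fin n → Bool) → Bool, and any i : Fin n, the function G x = if x i then c₁* else c₀* — where c₀* and c₁* are optimal constants for the cofactors F|_{x i = false} and F|_{x i = true} respectively — agrees with F on at least as many inputs as the constant function c does. -/
import Mathlib


theorem expansion_beats_constant (n : ℕ) (F : (Fin n → Bool) → Bool) (i : Fin n)
    (c c₀ c₁ : Bool)
    (h₀ : ∀ c' : Bool,
      (Finset.univ.filter (fun x : Fin n → Bool => x i = false ∧ F x = c')).card ≤
      (Finset.univ.filter (fun x : Fin n → Bool => x i = false ∧ F x = c₀)).card)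
    (h₁ : ∀ c' : Bool,
      (Finset.univ.filter (fun x : Fin n → Bool => x i = true ∧ F x = c')).card ≤
      (Finset.univ.filter (fun x : Fin n → Bool => x i = true ∧ F x = c₁)).card) :
    (Finset.univ.filter (fun x : Fin n → Bool => c = F x)).card ≤
      (Finset.univ.filter
        (fun x : Fin n → Bool => (if x i then c₁ else c₀) = F x)).card := by
  have split : ∀ p : (Fin n → Bool) → Prop, ∀ inst : DecidablePred p,
      (Finset.univ.filter p).card =
        (Finset.univ.filter (fun x : Fin n → Bool => x i = false ∧ p x)).card +
        (Finset.univ.filter (fun x : Fin n → Bool => x i = true ∧ p x)).card := by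
    intro p inst
    rw [← Finset.card_filter_add_card_filter_not
      (s := Finset.univ.filter p) (p := fun x => x i = false)]
    rw [Finset.filter_filter, Finset.filter_filter]
    congr 1
    · congr 1; ext x
      simp only [Finset.mem_filter, Finset.mem_univ, true_and]
      exact and_comm
    · congr 1; ext x
      simp only [Finset.mem_filter, Finset.mem_univ, true_and, Bool.not_eq_false]
      exact and_comm
  have hL := split (fun x => c = F x) inferInstance
  have hR := split (fun x => (if x i then c₁ else c₀) = F x) inferInstance
  rw [hL, hR]
  apply Nat.add_le_add
  · calc (Finset.univ.filter (fun x : Fin n → Bool => x i = false ∧ c = F x)).card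
        = (Finset.univ.filter (fun x : Fin n → Bool => x i = false ∧ F x = c)).card := by
          congr 1; ext x
          simp only [Finset.mem_filter, Finset.mem_univ, true_and]
          exact ⟨fun ⟨a, b⟩ => ⟨a, b.symm⟩, fun ⟨a, b⟩ => ⟨a, b.symm⟩⟩
      _ ≤ (Finset.univ.filter (fun x : Fin n → Bool => x i = false ∧ F x = c₀)).card := h₀ c
      _ = (Finset.univ.filter
            (fun x : Fin n → Bool => x i = false ∧ (if x i then c₁ else c₀) = F x)).card := by
          congr 1; ext x
          simp only [Finset.mem_filter, Finset.mem_univ, true_and]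
          constructor
          · rintro ⟨hx, hfx⟩
            refine ⟨hx, ?_⟩
            rw [hx]
            simpa using hfx.symm
          · rintro ⟨hx, hfx⟩
            rw [hx] at hfx
            simp only [Bool.false_eq_true, if_false] at hfx
            exact ⟨hx, hfx.symm⟩
  · calc (Finset.univ.filter (fun x : Fin n → Bool => x i = true ∧ c = F x)).card
        = (Finset.univ.filter (fun x : Fin n → Bool => x i = true ∧ F x = c)).card := by
          congr 1; ext x
          simp only [Finset.mem_filter, Finset.mem_univ, true_and]
          exact ⟨fun ⟨a, b⟩ => ⟨a, b.symm⟩, fun ⟨a, b⟩ => ⟨a, b.symm⟩⟩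
      _ ≤ (Finset.univ.filter (fun x : Fin n → Bool => x i = true ∧ F x = c₁)).card := h₁ c
      _ = (Finset.univ.filter
            (fun x : Fin n → Bool => x i = true ∧ (if x i then c₁ else c₀) = F x)).card := by
          congr 1; ext x
          simp only [Finset.mem_filter, Finset.mem_univ, true_and]
          constructor
          · rintro ⟨hx, hfx⟩
            refine ⟨hx, ?_⟩
            rw [hx]
            simpa using hfx.symm
          · rintro ⟨hx, hfx⟩
            rw [hx] at hfx
            simp only [if_true] at hfx
            exact ⟨hx, hfx.symm⟩
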